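/- For the root system of type Cₙ (for PSp(2n)) with simple coroots α₁∨ = ε₁, αᵢ∨ = −εᵢ₋₁ + εᵢ (2 ≤ i ≤ n) and fundamental weights ωᵢ = εᵢ + ⋯ + εₙ: if ν = Σνᵢωᵢ with all νᵢ ∈ {0, 1/2} satisfies ⟨β∨, ν⟩ < 1 for every coroot β∨ of level r₀ (where r₀ = n if n is odd and r₀ = n+1 if n is even), then ν₁ = ⋯ = ν_{⌊n/2⌋} = 0 and at most one of ν_{⌊n/2⌋+1},…,νₙ equals 1/2. -/
import Mathlib


noncomputable def dotC (n : ℕ) (x y : Fin n → ℝ) : ℝ := ∑ i, x i * y i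
noncomputable def eC (n k : ℕ) : Fin n → ℝ := fun j => if (j : ℕ) = k then 1 else 0
/-- Fundamental weights of type Cₙ (for PSp(2n)), 0-based: `ωᵢ = εᵢ + ⋯ + εₙ`. -/
noncomputable def wC (n : ℕ) (i : Fin n) : Fin n → ℝ :=
  fun j => if (i : ℕ) ≤ (j : ℕ) then 1 else 0

/-- Type Cₙ (PSp(2n)): if `ν = Σ cᵢωᵢ` with `cᵢ ∈ {0,1/2}` and `⟨β∨,ν⟩ < 1` for all
coroots `β∨` of the maximal level `r₀`, then `c₁ = ⋯ = c_{⌊n/2⌋} = 0` and at most one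
of the remaining coordinates equals 1/2. -/
theorem stmt_5 (n : ℕ) (hn : 0 < n) (c : Fin n → ℝ)
    (hc : ∀ i, c i = 0 ∨ c i = 1/2)
    (ν : Fin n → ℝ) (hν : ν = ∑ i, c i • wC n i)
    (hodd : Odd n →
      (∀ k : ℕ, k < (n - 1) / 2 → dotC n (eC n k + eC n (n - 2 - k)) ν < 1) ∧
      dotC n (eC n (n - 1)) ν < 1)
    (heven : Even n → ∀ k : ℕ, k < n / 2 → dotC n (eC n k + eC n (n - 1 - k)) ν < 1) :
    (∀ i : Fin n, (i : ℕ) < n / 2 → c i = 0) ∧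
    (∀ i j : Fin n, n / 2 ≤ (i : ℕ) → n / 2 ≤ (j : ℕ) →
      c i = 1/2 → c j = 1/2 → i = j) := by
  have hc0 : ∀ i, 0 ≤ c i := by
    intro i; rcases hc i with h | h <;> rw [h] <;> norm_num
  have hν' : ∀ j : Fin n, ν j = ∑ i, c i * (if (i : ℕ) ≤ (j : ℕ) then 1 else 0) := by
    intro j; rw [hν]; simp [wC, Finset.sum_apply]
  have hterm0 : ∀ (i j : Fin n), 0 ≤ c i * (if (i : ℕ) ≤ (j : ℕ) then (1:ℝ) else 0) := by
    intro i j
    have := hc0 i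
    split <;> nlinarith
  have hpos : ∀ j : Fin n, 0 ≤ ν j := by
    intro j; rw [hν' j]
    exact Finset.sum_nonneg fun i _ => hterm0 i j
  have hge : ∀ i j : Fin n, (i : ℕ) ≤ (j : ℕ) → c i ≤ ν j := by
    intro i j h
    rw [hν' j]
    have : c i = c i * (if (i : ℕ) ≤ (j : ℕ) then (1:ℝ) else 0) := by simp [h]
    rw [this]
    exact Finset.single_le_sum (fun i' _ => hterm0 i' j) (Finset.mem_univ i)
  have hdot : ∀ (k : ℕ) (hk : k < n), dotC n (eC n k) ν = ν ⟨k, hk⟩ := by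
    intro k hk
    unfold dotC eC
    rw [Finset.sum_eq_single (⟨k, hk⟩ : Fin n)]
    · simp
    · intro b _ hb
      have : (b : ℕ) ≠ k := by
        intro h; exact hb (Fin.ext h)
      simp [this]
    · intro h; exact absurd (Finset.mem_univ _) h
  have hdotadd : ∀ x y : Fin n → ℝ, dotC n (x + y) ν = dotC n x ν + dotC n y ν := by
    intro x y
    unfold dotC
    rw [← Finset.sum_add_distrib]
    exact Finset.sum_congr rfl fun j _ => by simp [add_mul]
  have hlast : n - 1 < n := by omega
  -- total sum < 1
  have htot : ν ⟨n - 1, hlast⟩ < 1 := by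
    rcases Nat.even_or_odd n with he | ho
    · have h2 : 2 ≤ n := by
        rcases he with ⟨m, hm⟩; omega
      have := heven he 0 (by omega)
      rw [hdotadd, hdot 0 (by omega), hdot (n - 1 - 0) (by omega)] at this
      have h0 : (0:ℝ) ≤ ν ⟨0, by omega⟩ := hpos _
      have : ν ⟨n - 1 - 0, by omega⟩ < 1 := by linarith
      simpa using this
    · have := (hodd ho).2
      rwa [hdot (n - 1) hlast] at this
  have htotsum : ν ⟨n - 1, hlast⟩ = ∑ i, c i := by
    rw [hν' _]
    exact Finset.sum_congr rfl fun i _ => by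
      have : (i : ℕ) ≤ n - 1 := by omega
      simp [this]
  constructor
  · intro i hi
    by_contra hne
    have hci : c i = 1/2 := (hc i).resolve_left hne
    rcases Nat.even_or_odd n with he | ho
    · have := heven he i hi
      have hj : n - 1 - (i : ℕ) < n := by omega
      rw [hdotadd, hdot (i : ℕ) i.isLt, hdot _ hj] at this
      have h1 : c i ≤ ν ⟨(i : ℕ), i.isLt⟩ := hge i _ (le_refl _)
      have h2 : c i ≤ ν ⟨n - 1 - (i : ℕ), hj⟩ := by
        apply hge
        have : 2 * (i : ℕ) < n := by
          have := Nat.div_mul_le_self n 2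
          rcases he with ⟨m, hm⟩
          omega
        simp; omega
      simp only [Fin.eta] at this h1
      rw [hci] at h1 h2
      linarith
    · have hn2 : n / 2 = (n - 1) / 2 := by rcases ho with ⟨m, hm⟩; omega
      have hi' : (i : ℕ) < (n - 1) / 2 := hn2 ▸ hi
      have := (hodd ho).1 (i : ℕ) hi'
      have hn3 : 3 ≤ n := by omega
      have hj : n - 2 - (i : ℕ) < n := by omega
      rw [hdotadd, hdot (i : ℕ) i.isLt, hdot _ hj] at this
      have h1 : c i ≤ ν ⟨(i : ℕ), i.isLt⟩ := hge i _ (le_refl _)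
      have h2 : c i ≤ ν ⟨n - 2 - (i : ℕ), hj⟩ := by
        apply hge
        have : 2 * (i : ℕ) + 1 < n - 1 := by rcases ho with ⟨m, hm⟩; omega
        simp; omega
      simp only [Fin.eta] at this h1
      rw [hci] at h1 h2
      linarith
  · intro i j _ _ hci hcj
    by_contra hij
    have hsub : ({i, j} : Finset (Fin n)) ⊆ Finset.univ := Finset.subset_univ _
    have hpair : ∑ k ∈ ({i, j} : Finset (Fin n)), c k = c i + c j :=
      Finset.sum_pair hij
    have hle : ∑ k ∈ ({i, j} : Finset (Fin n)), c k ≤ ∑ k, c k :=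
      Finset.sum_le_sum_of_subset_of_nonneg hsub fun k _ _ => hc0 k
    rw [hpair, hci, hcj] at hle
    rw [htotsum] at htot
    linarith
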